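/- arXiv:2101.05186 — 6 statements merged into one kernel-verified Lean document; each statement's English description precedes it below -/
import Mathlib

section
/- For every timestep τ ≥ 0, the total mass stored in the MC-LSTM memory cells satisfies m_c(τ) = m_c(0) + Σ_{t=1}^{τ} x(t) − Σ_{t=1}^{τ} m_h(t); that is, the change of mass in the memory cells equals the accumulated input mass minus the accumulated output mass. -/
/-- **MC-LSTM conservation property.**
For every timestep τ ≥ 0, the total mass stored in the MC-LSTM memory cells satisfies
m_c(τ) = m_c(0) + Σ_{t=1}^{τ} x(t) − Σ_{t=1}^{τ} m_h(t). -/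
theorem mclstm_conservation
    (K : ℕ)
    (x : ℕ → ℝ) (hx : ∀ t, 1 ≤ t → 0 ≤ x t)
    (i : ℕ → Fin K → ℝ)
    (hi_nonneg : ∀ t k, 1 ≤ t → 0 ≤ i t k)
    (hi_sum : ∀ t, 1 ≤ t → ∑ k, i t k = 1)
    (o : ℕ → Fin K → ℝ)
    (ho : ∀ t k, 1 ≤ t → o t k ∈ Set.Icc (0 : ℝ) 1)
    (R : ℕ → Matrix (Fin K) (Fin K) ℝ)
    (hR_nonneg : ∀ t k j, 1 ≤ t → 0 ≤ R t k j)
    (hR_col : ∀ t j, 1 ≤ t → ∑ k, R t k j = 1)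
    (c mtot h : ℕ → Fin K → ℝ)
    (hc0 : ∀ k, 0 ≤ c 0 k)
    (hmtot : ∀ t, 1 ≤ t → mtot t = (R t).mulVec (c (t - 1)) + x t • i t)
    (hc : ∀ t, 1 ≤ t → c t = fun k => (1 - o t k) * mtot t k)
    (hh : ∀ t, 1 ≤ t → h t = fun k => o t k * mtot t k)
    (τ : ℕ) :
    ∑ k, c τ k =
      ∑ k, c 0 k + (∑ t ∈ Finset.Icc 1 τ, x t) - ∑ t ∈ Finset.Icc 1 τ, ∑ k, h t k := by

  induction τ with
  | zero => simp
  | succ n ih =>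
    have hn1 : 1 ≤ n + 1 := Nat.le_add_left 1 n
    have hsum_mtot : ∑ k, mtot (n+1) k = ∑ k, c n k + x (n+1) := by
      rw [hmtot (n+1) hn1]
      simp only [Pi.add_apply, Pi.smul_apply, smul_eq_mul, Matrix.mulVec,
        dotProduct, Nat.add_sub_cancel]
      rw [Finset.sum_add_distrib, ← Finset.mul_sum, hi_sum (n+1) hn1, mul_one]
      congr 1
      rw [Finset.sum_comm]
      refine Finset.sum_congr rfl fun j _ => ?_
      rw [← Finset.sum_mul, hR_col (n+1) j hn1, one_mul]
    have hch : ∑ k, c (n+1) k + ∑ k, h (n+1) k = ∑ k, mtot (n+1) k := by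
      rw [hc (n+1) hn1, hh (n+1) hn1, ← Finset.sum_add_distrib]
      refine Finset.sum_congr rfl fun k _ => ?_
      ring
    rw [Finset.sum_Icc_succ_top hn1, Finset.sum_Icc_succ_top hn1]
    have := hch
    rw [hsum_mtot, ih] at this
    linarith
end

section
/- For every timestep t ≥ 1, the stored mass satisfies the single-step conservation law m_c(t) = m_c(t−1) + x(t) − m_h(t). -/
/-- **MC-LSTM single-step conservation:** for every t ≥ 1,
m_c(t) = m_c(t−1) + x(t) − m_h(t). -/
theorem mclstm_step_conservation
    (K : ℕ)
    (x : ℕ → ℝ) (hx : ∀ t, 1 ≤ t → 0 ≤ x t)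
    (i : ℕ → Fin K → ℝ)
    (hi_nonneg : ∀ t k, 1 ≤ t → 0 ≤ i t k)
    (hi_sum : ∀ t, 1 ≤ t → ∑ k, i t k = 1)
    (o : ℕ → Fin K → ℝ)
    (ho : ∀ t k, 1 ≤ t → o t k ∈ Set.Icc (0 : ℝ) 1)
    (R : ℕ → Matrix (Fin K) (Fin K) ℝ)
    (hR_nonneg : ∀ t k j, 1 ≤ t → 0 ≤ R t k j)
    (hR_col : ∀ t j, 1 ≤ t → ∑ k, R t k j = 1)
    (c mtot h : ℕ → Fin K → ℝ)
    (hc0 : ∀ k, 0 ≤ c 0 k)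
    (hmtot : ∀ t, 1 ≤ t → mtot t = (R t).mulVec (c (t - 1)) + x t • i t)
    (hc : ∀ t, 1 ≤ t → c t = fun k => (1 - o t k) * mtot t k)
    (hh : ∀ t, 1 ≤ t → h t = fun k => o t k * mtot t k)
    (t : ℕ) (ht : 1 ≤ t) :
    ∑ k, c t k = ∑ k, c (t - 1) k + x t - ∑ k, h t k := by
  have hsum : ∑ k, mtot t k = ∑ k, c (t - 1) k + x t := by
    rw [hmtot t ht]
    simp only [Pi.add_apply, Pi.smul_apply, Matrix.mulVec, dotProduct, smul_eq_mul]
    rw [Finset.sum_add_distrib, Finset.sum_comm, ← Finset.mul_sum, hi_sum t ht, mul_one]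
    congr 1
    apply Finset.sum_congr rfl
    intro j _
    rw [← Finset.sum_mul, hR_col t j ht, one_mul]
  have hch : ∑ k, c t k + ∑ k, h t k = ∑ k, mtot t k := by
    rw [hc t ht, hh t ht, ← Finset.sum_add_distrib]
    apply Finset.sum_congr rfl
    intro k _
    ring
  linarith
end

section
/- For every timestep τ ≥ 0 and every index k, the memory cell value is bounded by the accumulated mass input plus the initial stored mass: |c_k(τ)| ≤ Σ_{t=1}^{τ} x(t) + m_c(0). -/
/-- **Boundedness of MC-LSTM cell states:** for every τ ≥ 0 and index k,
|c_k(τ)| ≤ Σ_{t=1}^{τ} x(t) + m_c(0). -/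
theorem mclstm_cell_bound
    (K : ℕ)
    (x : ℕ → ℝ) (hx : ∀ t, 1 ≤ t → 0 ≤ x t)
    (i : ℕ → Fin K → ℝ)
    (hi_nonneg : ∀ t k, 1 ≤ t → 0 ≤ i t k)
    (hi_sum : ∀ t, 1 ≤ t → ∑ k, i t k = 1)
    (o : ℕ → Fin K → ℝ)
    (ho : ∀ t k, 1 ≤ t → o t k ∈ Set.Icc (0 : ℝ) 1)
    (R : ℕ → Matrix (Fin K) (Fin K) ℝ)
    (hR_nonneg : ∀ t k j, 1 ≤ t → 0 ≤ R t k j)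
    (hR_col : ∀ t j, 1 ≤ t → ∑ k, R t k j = 1)
    (c mtot h : ℕ → Fin K → ℝ)
    (hc0 : ∀ k, 0 ≤ c 0 k)
    (hmtot : ∀ t, 1 ≤ t → mtot t = (R t).mulVec (c (t - 1)) + x t • i t)
    (hc : ∀ t, 1 ≤ t → c t = fun k => (1 - o t k) * mtot t k)
    (hh : ∀ t, 1 ≤ t → h t = fun k => o t k * mtot t k)
    (τ : ℕ) (k : Fin K) :
    |c τ k| ≤ (∑ t ∈ Finset.Icc 1 τ, x t) + ∑ j, c 0 j := by
  -- Main invariant: nonnegativity and mass bound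
  have key : ∀ τ : ℕ, (∀ k, 0 ≤ c τ k) ∧
      (∑ j, c τ j) ≤ (∑ t ∈ Finset.Icc 1 τ, x t) + ∑ j, c 0 j := by
    intro τ
    induction τ with
    | zero => simp [hc0]
    | succ n ih =>
      have ht : 1 ≤ n + 1 := Nat.le_add_left 1 n
      have hmt : ∀ k, 0 ≤ mtot (n + 1) k := by
        intro k
        rw [hmtot (n + 1) ht]
        simp only [Pi.add_apply, Pi.smul_apply, Matrix.mulVec, dotProduct, smul_eq_mul]
        have : (0:ℝ) ≤ ∑ j, R (n+1) k j * c n j := by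
          apply Finset.sum_nonneg
          intro j _
          exact mul_nonneg (hR_nonneg _ _ _ ht) (ih.1 j)
        simpa using add_nonneg this (mul_nonneg (hx _ ht) (hi_nonneg _ _ ht))
      have hcn : ∀ k, 0 ≤ c (n + 1) k := by
        intro k
        rw [hc (n + 1) ht]
        exact mul_nonneg (by linarith [(ho (n+1) k ht).2]) (hmt k)
      refine ⟨hcn, ?_⟩
      have hle : ∀ k, c (n + 1) k ≤ mtot (n + 1) k := by
        intro k
        rw [hc (n + 1) ht]
        have h1 : (1 - o (n+1) k) ≤ 1 := by linarith [(ho (n+1) k ht).1]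
        calc (1 - o (n+1) k) * mtot (n+1) k ≤ 1 * mtot (n+1) k :=
              mul_le_mul_of_nonneg_right h1 (hmt k)
          _ = mtot (n+1) k := one_mul _
      have hsum : ∑ j, mtot (n + 1) j = (∑ j, c n j) + x (n + 1) := by
        have : ∀ k, mtot (n+1) k = (∑ j, R (n+1) k j * c n j) + x (n+1) * i (n+1) k := by
          intro k
          rw [hmtot (n + 1) ht]
          simp [Matrix.mulVec, dotProduct]
        rw [Finset.sum_congr rfl (fun k _ => this k), Finset.sum_add_distrib,
          Finset.sum_comm, ← Finset.mul_sum, hi_sum (n+1) ht]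
        have : ∑ j, ∑ k, R (n+1) k j * c n j = ∑ j, c n j := by
          apply Finset.sum_congr rfl
          intro j _
          rw [← Finset.sum_mul, hR_col (n+1) j ht, one_mul]
        rw [this, mul_one]
      have hicc : ∑ t ∈ Finset.Icc 1 (n + 1), x t
          = (∑ t ∈ Finset.Icc 1 n, x t) + x (n + 1) := by
        rw [Finset.sum_Icc_succ_top ht]
      calc ∑ j, c (n + 1) j ≤ ∑ j, mtot (n + 1) j :=
            Finset.sum_le_sum (fun j _ => hle j)
        _ = (∑ j, c n j) + x (n + 1) := hsum
        _ ≤ ((∑ t ∈ Finset.Icc 1 n, x t) + ∑ j, c 0 j) + x (n + 1) := by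
            linarith [ih.2]
        _ = (∑ t ∈ Finset.Icc 1 (n + 1), x t) + ∑ j, c 0 j := by
            rw [hicc]; ring
  obtain ⟨hnn, hbd⟩ := key τ
  rw [abs_of_nonneg (hnn k)]
  calc c τ k ≤ ∑ j, c τ j :=
        Finset.single_le_sum (fun j _ => hnn j) (Finset.mem_univ k)
    _ ≤ _ := hbd
end

section
/- For every timestep τ ≥ 0, the accumulated mass efflux is bounded by the initial stored mass plus the accumulated mass input: Σ_{t=1}^{τ} m_h(t) ≤ m_c(0) + Σ_{t=1}^{τ} x(t). -/
/-- **Bound on accumulated mass efflux:** for every τ ≥ 0,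
Σ_{t=1}^{τ} m_h(t) ≤ m_c(0) + Σ_{t=1}^{τ} x(t). -/
theorem mclstm_efflux_bound
    (K : ℕ)
    (x : ℕ → ℝ) (hx : ∀ t, 1 ≤ t → 0 ≤ x t)
    (i : ℕ → Fin K → ℝ)
    (hi_nonneg : ∀ t k, 1 ≤ t → 0 ≤ i t k)
    (hi_sum : ∀ t, 1 ≤ t → ∑ k, i t k = 1)
    (o : ℕ → Fin K → ℝ)
    (ho : ∀ t k, 1 ≤ t → o t k ∈ Set.Icc (0 : ℝ) 1)
    (R : ℕ → Matrix (Fin K) (Fin K) ℝ)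
    (hR_nonneg : ∀ t k j, 1 ≤ t → 0 ≤ R t k j)
    (hR_col : ∀ t j, 1 ≤ t → ∑ k, R t k j = 1)
    (c mtot h : ℕ → Fin K → ℝ)
    (hc0 : ∀ k, 0 ≤ c 0 k)
    (hmtot : ∀ t, 1 ≤ t → mtot t = (R t).mulVec (c (t - 1)) + x t • i t)
    (hc : ∀ t, 1 ≤ t → c t = fun k => (1 - o t k) * mtot t k)
    (hh : ∀ t, 1 ≤ t → h t = fun k => o t k * mtot t k)
    (τ : ℕ) :
    ∑ t ∈ Finset.Icc 1 τ, ∑ k, h t k ≤ ∑ k, c 0 k + ∑ t ∈ Finset.Icc 1 τ, x t := by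
  -- nonnegativity of c
  have hcnn : ∀ τ k, 0 ≤ c τ k := by
    intro τ
    induction τ with
    | zero => exact hc0
    | succ n ih =>
      intro k
      have h1 : 1 ≤ n + 1 := Nat.le_add_left 1 n
      have hm : 0 ≤ mtot (n+1) k := by
        rw [hmtot (n+1) h1]
        simp only [Pi.add_apply, Pi.smul_apply, smul_eq_mul, Nat.add_sub_cancel]
        have : 0 ≤ (R (n+1)).mulVec (c n) k := by
          unfold Matrix.mulVec dotProduct
          apply Finset.sum_nonneg
          intro j _
          exact mul_nonneg (hR_nonneg _ _ _ h1) (ih j)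
        exact add_nonneg this (mul_nonneg (hx _ h1) (hi_nonneg _ _ h1))
      rw [hc (n+1) h1]
      exact mul_nonneg (by linarith [(ho (n+1) k h1).2]) hm
  -- key equality by induction
  have key : ∀ τ, ∑ t ∈ Finset.Icc 1 τ, ∑ k, h t k + ∑ k, c τ k
      = ∑ k, c 0 k + ∑ t ∈ Finset.Icc 1 τ, x t := by
    intro τ
    induction τ with
    | zero => simp
    | succ n ih =>
      have h1 : 1 ≤ n + 1 := Nat.le_add_left 1 n
      have hmsum : ∑ k, mtot (n+1) k = ∑ k, c n k + x (n+1) := by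
        rw [hmtot (n+1) h1]
        simp only [Pi.add_apply, Pi.smul_apply, smul_eq_mul, Nat.add_sub_cancel]
        rw [Finset.sum_add_distrib, ← Finset.mul_sum, hi_sum _ h1, mul_one]
        congr 1
        unfold Matrix.mulVec dotProduct
        rw [Finset.sum_comm]
        apply Finset.sum_congr rfl
        intro j _
        rw [← Finset.sum_mul, hR_col _ _ h1, one_mul]
      have hch : ∑ k, h (n+1) k + ∑ k, c (n+1) k = ∑ k, mtot (n+1) k := by
        rw [hh _ h1, hc _ h1, ← Finset.sum_add_distrib]
        apply Finset.sum_congr rfl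
        intro k _; ring
      rw [Finset.sum_Icc_succ_top h1, Finset.sum_Icc_succ_top h1]
      have := ih
      linarith
  have hcτ : 0 ≤ ∑ k, c τ k := Finset.sum_nonneg fun k _ => hcnn τ k
  linarith [key τ]
end

section
/- If the series of mass inputs converges, i.e. lim_{τ→∞} Σ_{t=1}^{τ} x(t) = m_x^∞ exists (in ℝ), then the series of mass effluxes Σ_{t=1}^{∞} m_h(t) converges, and consequently the sequence of stored masses m_c(τ) converges as τ → ∞. -/
/-- **Convergence:** if the series of mass inputs converges, then the series of
mass effluxes converges, and the sequence of stored masses m_c(τ) converges. -/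
theorem mclstm_convergence
    (K : ℕ)
    (x : ℕ → ℝ) (hx : ∀ t, 1 ≤ t → 0 ≤ x t)
    (i : ℕ → Fin K → ℝ)
    (hi_nonneg : ∀ t k, 1 ≤ t → 0 ≤ i t k)
    (hi_sum : ∀ t, 1 ≤ t → ∑ k, i t k = 1)
    (o : ℕ → Fin K → ℝ)
    (ho : ∀ t k, 1 ≤ t → o t k ∈ Set.Icc (0 : ℝ) 1)
    (R : ℕ → Matrix (Fin K) (Fin K) ℝ)
    (hR_nonneg : ∀ t k j, 1 ≤ t → 0 ≤ R t k j)
    (hR_col : ∀ t j, 1 ≤ t → ∑ k, R t k j = 1)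
    (c mtot h : ℕ → Fin K → ℝ)
    (hc0 : ∀ k, 0 ≤ c 0 k)
    (hmtot : ∀ t, 1 ≤ t → mtot t = (R t).mulVec (c (t - 1)) + x t • i t)
    (hc : ∀ t, 1 ≤ t → c t = fun k => (1 - o t k) * mtot t k)
    (hh : ∀ t, 1 ≤ t → h t = fun k => o t k * mtot t k)
    (mx : ℝ)
    (hconv : Filter.Tendsto (fun τ => ∑ t ∈ Finset.Icc 1 τ, x t) Filter.atTop (nhds mx)) :
    (∃ S : ℝ, Filter.Tendsto (fun τ => ∑ t ∈ Finset.Icc 1 τ, ∑ k, h t k)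
        Filter.atTop (nhds S)) ∧
    (∃ L : ℝ, Filter.Tendsto (fun τ => ∑ k, c τ k) Filter.atTop (nhds L)) := by
  -- nonnegativity of c by induction
  have hcnn : ∀ τ, ∀ k, 0 ≤ c τ k := by
    intro τ
    induction τ with
    | zero => exact hc0
    | succ n ih =>
        intro k
        have h1 : 1 ≤ n + 1 := Nat.le_add_left 1 n
        have hmnn : 0 ≤ mtot (n + 1) k := by
          rw [hmtot (n + 1) h1]
          simp only [Pi.add_apply, Pi.smul_apply, smul_eq_mul, Matrix.mulVec,
            dotProduct]
          have : 0 ≤ ∑ j, R (n + 1) k j * c ((n + 1) - 1) j := by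
            apply Finset.sum_nonneg
            intro j _
            have hn : (n + 1) - 1 = n := by omega
            rw [hn]
            exact mul_nonneg (hR_nonneg _ _ _ h1) (ih j)
          exact add_nonneg this (mul_nonneg (hx _ h1) (hi_nonneg _ _ h1))
        rw [hc (n + 1) h1]
        exact mul_nonneg (by linarith [(ho (n+1) k h1).2]) hmnn
  -- nonnegativity of mtot
  have hmnn : ∀ t, 1 ≤ t → ∀ k, 0 ≤ mtot t k := by
    intro t ht k
    rw [hmtot t ht]
    simp only [Pi.add_apply, Pi.smul_apply, smul_eq_mul, Matrix.mulVec, dotProduct]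
    have : 0 ≤ ∑ j, R t k j * c (t - 1) j :=
      Finset.sum_nonneg fun j _ => mul_nonneg (hR_nonneg _ _ _ ht) (hcnn _ j)
    exact add_nonneg this (mul_nonneg (hx _ ht) (hi_nonneg _ _ ht))
  -- conservation step
  have hstep : ∀ t, 1 ≤ t → (∑ k, c t k) + (∑ k, h t k) = (∑ k, c (t - 1) k) + x t := by
    intro t ht
    have hsum : (∑ k, c t k) + (∑ k, h t k) = ∑ k, mtot t k := by
      rw [hc t ht, hh t ht, ← Finset.sum_add_distrib]
      apply Finset.sum_congr rfl
      intro k _; ring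
    rw [hsum, hmtot t ht]
    simp only [Pi.add_apply, Pi.smul_apply, smul_eq_mul]
    rw [Finset.sum_add_distrib]
    congr 1
    · unfold Matrix.mulVec dotProduct
      rw [Finset.sum_comm]
      calc ∑ j, ∑ k, R t k j * c (t - 1) j
          = ∑ j, (∑ k, R t k j) * c (t - 1) j := by
            apply Finset.sum_congr rfl; intro j _; rw [Finset.sum_mul]
        _ = ∑ j, c (t - 1) j := by
            apply Finset.sum_congr rfl; intro j _; rw [hR_col t j ht, one_mul]
    · rw [← Finset.mul_sum, hi_sum t ht, mul_one]
  -- main identity: ∑ c τ + H τ = ∑ c 0 + X τ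
  set X : ℕ → ℝ := fun τ => ∑ t ∈ Finset.Icc 1 τ, x t with hX
  set H : ℕ → ℝ := fun τ => ∑ t ∈ Finset.Icc 1 τ, ∑ k, h t k with hH
  have hid : ∀ τ, (∑ k, c τ k) + H τ = (∑ k, c 0 k) + X τ := by
    intro τ
    induction τ with
    | zero => simp [hH, hX]
    | succ n ih =>
        have h1 : 1 ≤ n + 1 := Nat.le_add_left 1 n
        have hHs : H (n + 1) = H n + ∑ k, h (n + 1) k :=
          Finset.sum_Icc_succ_top h1 _
        have hXs : X (n + 1) = X n + x (n + 1) :=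
          Finset.sum_Icc_succ_top h1 _
        have := hstep (n + 1) h1
        have hn : (n + 1) - 1 = n := by omega
        rw [hn] at this
        rw [hHs, hXs]
        linarith
  -- X is monotone, bounded by mx
  have hXmono : Monotone X := by
    intro a b hab
    apply Finset.sum_le_sum_of_subset_of_nonneg (Finset.Icc_subset_Icc_right hab)
    intro t ht _
    exact hx t (Finset.mem_Icc.mp ht).1
  have hXle : ∀ τ, X τ ≤ mx := fun τ =>
    hXmono.ge_of_tendsto hconv τ
  -- H is monotone and bounded
  have hHmono : Monotone H := by
    intro a b hab
    apply Finset.sum_le_sum_of_subset_of_nonneg (Finset.Icc_subset_Icc_right hab)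
    intro t ht _
    have h1 : 1 ≤ t := (Finset.mem_Icc.mp ht).1
    apply Finset.sum_nonneg
    intro k _
    rw [hh t h1]
    exact mul_nonneg (ho t k h1).1 (hmnn t h1 k)
  have hHbdd : BddAbove (Set.range H) := by
    refine ⟨(∑ k, c 0 k) + mx, ?_⟩
    rintro _ ⟨τ, rfl⟩
    have := hid τ
    have hcτ : 0 ≤ ∑ k, c τ k := Finset.sum_nonneg fun k _ => hcnn τ k
    have := hXle τ
    linarith [hid τ]
  have hHconv : Filter.Tendsto H Filter.atTop (nhds (⨆ τ, H τ)) :=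
    tendsto_atTop_ciSup hHmono hHbdd
  refine ⟨⟨⨆ τ, H τ, hHconv⟩, ⟨(∑ k, c 0 k) + mx - (⨆ τ, H τ), ?_⟩⟩
  have : (fun τ => ∑ k, c τ k) = fun τ => (∑ k, c 0 k) + X τ - H τ := by
    funext τ
    linarith [hid τ]
  rw [this]
  exact (((tendsto_const_nhds.add hconv).sub hHconv))
end

section
/- The conservation property holds for vector-valued mass inputs: if at each timestep t the mass input is a vector x(t) ∈ ℝ^M with nonnegative entries and the input gate is a left-stochastic K×M matrix I(t), with recurrence m_tot(t) = R(t)·c(t−1) + I(t)·x(t), c(t) = (1 − o(t)) ⊙ m_tot(t), h(t) = o(t) ⊙ m_tot(t), then for every τ ≥ 0, m_c(τ) = m_c(0) + Σ_{t=1}^{τ} Σ_{m=1}^{M} x_m(t) − Σ_{t=1}^{τ} m_h(t). -/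
/-- **MC-LSTM conservation with vector-valued mass inputs:** with mass input vectors
x(t) ∈ ℝ^M (entrywise nonnegative), left-stochastic input gate matrices I(t) ∈ ℝ^{K×M},
for every τ ≥ 0,
m_c(τ) = m_c(0) + Σ_{t=1}^{τ} Σ_{m=1}^{M} x_m(t) − Σ_{t=1}^{τ} m_h(t). -/
theorem mclstm_conservation_vector_input
    (K M : ℕ)
    (x : ℕ → Fin M → ℝ) (hx : ∀ t m, 1 ≤ t → 0 ≤ x t m)
    (I : ℕ → Matrix (Fin K) (Fin M) ℝ)
    (hI_nonneg : ∀ t k m, 1 ≤ t → 0 ≤ I t k m)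
    (hI_col : ∀ t m, 1 ≤ t → ∑ k, I t k m = 1)
    (o : ℕ → Fin K → ℝ)
    (ho : ∀ t k, 1 ≤ t → o t k ∈ Set.Icc (0 : ℝ) 1)
    (R : ℕ → Matrix (Fin K) (Fin K) ℝ)
    (hR_nonneg : ∀ t k j, 1 ≤ t → 0 ≤ R t k j)
    (hR_col : ∀ t j, 1 ≤ t → ∑ k, R t k j = 1)
    (c mtot h : ℕ → Fin K → ℝ)
    (hc0 : ∀ k, 0 ≤ c 0 k)
    (hmtot : ∀ t, 1 ≤ t → mtot t = (R t).mulVec (c (t - 1)) + (I t).mulVec (x t))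
    (hc : ∀ t, 1 ≤ t → c t = fun k => (1 - o t k) * mtot t k)
    (hh : ∀ t, 1 ≤ t → h t = fun k => o t k * mtot t k)
    (τ : ℕ) :
    ∑ k, c τ k =
      ∑ k, c 0 k + (∑ t ∈ Finset.Icc 1 τ, ∑ m, x t m)
        - ∑ t ∈ Finset.Icc 1 τ, ∑ k, h t k := by
  induction τ with
  | zero => simp
  | succ n ih =>
    have h1 : 1 ≤ n + 1 := Nat.le_add_left 1 n
    have hsum : ∑ k, mtot (n+1) k = ∑ k, c n k + ∑ m, x (n+1) m := by
      rw [hmtot (n+1) h1]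
      simp only [Pi.add_apply, Finset.sum_add_distrib, Matrix.mulVec, dotProduct]
      have hA : ∑ k, ∑ j, R (n+1) k j * c n j = ∑ j, c n j := by
        rw [Finset.sum_comm]
        simp only [← Finset.sum_mul, hR_col (n+1) _ h1, one_mul]
      have hB : ∑ k, ∑ m, I (n+1) k m * x (n+1) m = ∑ m, x (n+1) m := by
        rw [Finset.sum_comm]
        simp only [← Finset.sum_mul, hI_col (n+1) _ h1, one_mul]
      simpa using by rw [hA, hB]
    have hch : ∑ k, c (n+1) k + ∑ k, h (n+1) k = ∑ k, mtot (n+1) k := by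
      rw [hc (n+1) h1, hh (n+1) h1, ← Finset.sum_add_distrib]
      congr 1; funext k; ring
    rw [Finset.sum_Icc_succ_top h1, Finset.sum_Icc_succ_top h1]
    have : ∑ k, c (n+1) k = ∑ k, mtot (n+1) k - ∑ k, h (n+1) k := by linarith
    rw [this, hsum, ih]; ring
end
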